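/- arXiv:1906.12093 — 2 statements merged into one kernel-verified Lean document; each statement's English description precedes it below -/
import Mathlib

section
/- Let Ω ⊂ ℝᴺ be a bounded domain and let (λ₁, φ₁) be the principal Robin eigenpair of the Laplacian with φ₁ > 0 normalized by ∫_Ω φ₁ dx = 1. If w ∈ C²(Ω̄) satisfies −Δw = μ/(1−w)² in Ω with 0 ≤ w < 1 and ∂w/∂ν + βw = 0 on ∂Ω (β > 0), then μ ≤ λ₁ ∫_Ω w φ₁ dx ≤ λ₁. -/
open MeasureTheory Real Set InnerProductSpace

/-- Divergence of a vector field on Euclidean space. -/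
noncomputable def divg {N : ℕ} (F : EuclideanSpace ℝ (Fin N) → EuclideanSpace ℝ (Fin N))
    (x : EuclideanSpace ℝ (Fin N)) : ℝ :=
  ∑ i, fderiv ℝ F x (EuclideanSpace.single i 1) i

/-- Laplacian of a scalar field on Euclidean space. -/
noncomputable def lap {N : ℕ} (u : EuclideanSpace ℝ (Fin N) → ℝ)
    (x : EuclideanSpace ℝ (Fin N)) : ℝ :=
  ∑ i, fderiv ℝ (fun y => fderiv ℝ u y (EuclideanSpace.single i 1)) x (EuclideanSpace.single i 1)

lemma grad_contDiff {N : ℕ} (v : EuclideanSpace ℝ (Fin N) → ℝ) (hv : ContDiff ℝ 2 v) :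
    ContDiff ℝ 1 (gradient v) :=
  (toDual ℝ (EuclideanSpace ℝ (Fin N))).symm.contDiff.comp (hv.fderiv_right (by norm_num))

lemma grad_apply {N : ℕ} (v : EuclideanSpace ℝ (Fin N) → ℝ) (x : EuclideanSpace ℝ (Fin N))
    (i : Fin N) :
    gradient v x i = fderiv ℝ v x (EuclideanSpace.single i 1) := by
  have : (inner ℝ (gradient v x) (EuclideanSpace.single i 1) : ℝ)
      = fderiv ℝ v x (EuclideanSpace.single i 1) := by rw [gradient, toDual_symm_apply]
  rw [EuclideanSpace.inner_single_right, one_mul, conj_trivial] at this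
  exact this

lemma divg_smul_grad {N : ℕ} (u v : EuclideanSpace ℝ (Fin N) → ℝ)
    (hu : ContDiff ℝ 2 u) (hv : ContDiff ℝ 2 v) (x : EuclideanSpace ℝ (Fin N)) :
    divg (fun y => u y • gradient v y) x =
      (inner ℝ (gradient u x) (gradient v x) : ℝ) + u x * lap v x := by
  have hGd : DifferentiableAt ℝ (gradient v) x :=
    ((grad_contDiff v hv).differentiable one_ne_zero).differentiableAt
  have hud : DifferentiableAt ℝ u x :=
    (hu.differentiable (by norm_num)).differentiableAt
  have hfd : fderiv ℝ (fun y => u y • gradient v y) x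
      = u x • fderiv ℝ (gradient v) x + (fderiv ℝ u x).smulRight (gradient v x) :=
    fderiv_smul hud hGd
  have hproj : ∀ i : Fin N, fderiv ℝ (fun y => fderiv ℝ v y (EuclideanSpace.single i 1)) x
      (EuclideanSpace.single i 1) = fderiv ℝ (gradient v) x (EuclideanSpace.single i 1) i := by
    intro i
    have h1 : (fun y => fderiv ℝ v y (EuclideanSpace.single i 1))
        = fun y => (EuclideanSpace.proj (𝕜 := ℝ) i) (gradient v y) := by
      funext y; simp [grad_apply]
    rw [h1]
    have h2 : fderiv ℝ (fun y => (EuclideanSpace.proj (𝕜 := ℝ) i) (gradient v y)) x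
        = (EuclideanSpace.proj (𝕜 := ℝ) i).comp (fderiv ℝ (gradient v) x) :=
      ((EuclideanSpace.proj (𝕜 := ℝ) i).hasFDerivAt.comp x hGd.hasFDerivAt).fderiv
    rw [h2]; rfl
  unfold divg lap
  rw [hfd]
  simp only [ContinuousLinearMap.add_apply, ContinuousLinearMap.coe_smul', Pi.smul_apply,
    ContinuousLinearMap.smulRight_apply, PiLp.add_apply, PiLp.smul_apply, smul_eq_mul,
    PiLp.inner_apply, RCLike.inner_apply, conj_trivial]
  rw [Finset.sum_add_distrib, add_comm]
  congr 1
  · exact Finset.sum_congr rfl fun i _ => by rw [grad_apply u x i, mul_comm]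
  · rw [Finset.mul_sum]
    exact Finset.sum_congr rfl fun i _ => by rw [hproj i]

lemma divg_sub {N : ℕ} (A B : EuclideanSpace ℝ (Fin N) → EuclideanSpace ℝ (Fin N))
    (x : EuclideanSpace ℝ (Fin N)) (hA : DifferentiableAt ℝ A x) (hB : DifferentiableAt ℝ B x) :
    divg (fun y => A y - B y) x = divg A x - divg B x := by
  unfold divg
  rw [fderiv_fun_sub hA hB]
  simp [Finset.sum_sub_distrib]

theorem stmt_4 {N : ℕ} (Ω : Set (EuclideanSpace ℝ (Fin N)))
    (hΩo : IsOpen Ω) (hΩb : Bornology.IsBounded Ω)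
    (ν : EuclideanSpace ℝ (Fin N) → EuclideanSpace ℝ (Fin N))
    (hν : ∀ x ∈ frontier Ω, ‖ν x‖ = 1)
    (σ : Measure (EuclideanSpace ℝ (Fin N)))
    (hdiv : ∀ F : EuclideanSpace ℝ (Fin N) → EuclideanSpace ℝ (Fin N), ContDiff ℝ 1 F →
      (∫ x in Ω, divg F x) = ∫ x in frontier Ω, (inner ℝ (F x) (ν x) : ℝ) ∂σ)
    (β μ lam₁ : ℝ) (hβ : 0 < β) (hμ : 0 < μ)
    (φ₁ : EuclideanSpace ℝ (Fin N) → ℝ) (hφsm : ContDiff ℝ 2 φ₁)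
    (hφeig : ∀ x ∈ Ω, -lap φ₁ x = lam₁ * φ₁ x)
    (hφrobin : ∀ x ∈ frontier Ω, (inner ℝ (gradient φ₁ x) (ν x) : ℝ) + β * φ₁ x = 0)
    (hφpos : ∀ x ∈ Ω, 0 < φ₁ x)
    (hφnorm : (∫ x in Ω, φ₁ x) = 1)
    (w : EuclideanSpace ℝ (Fin N) → ℝ) (hw : ContDiff ℝ 2 w)
    (hwpde : ∀ x ∈ Ω, -lap w x = μ / (1 - w x) ^ 2)
    (hw0 : ∀ x ∈ closure Ω, 0 ≤ w x) (hw1 : ∀ x ∈ closure Ω, w x < 1)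
    (hwrobin : ∀ x ∈ frontier Ω, (inner ℝ (gradient w x) (ν x) : ℝ) + β * w x = 0) :
    μ ≤ lam₁ * ∫ x in Ω, w x * φ₁ x ∧ lam₁ * (∫ x in Ω, w x * φ₁ x) ≤ lam₁ := by
  have hΩm : MeasurableSet Ω := hΩo.measurableSet
  have hKcpt : IsCompact (closure Ω) := hΩb.isCompact_closure
  -- continuity facts
  have hφc : Continuous φ₁ := hφsm.continuous
  have hwc : Continuous w := hw.continuous
  -- integrability of w * φ₁ on Ω
  have hIwφ : IntegrableOn (fun x => w x * φ₁ x) Ω volume :=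
    (((hwc.mul hφc).continuousOn.integrableOn_compact hKcpt).mono_set subset_closure)
  have hIφ : IntegrableOn φ₁ Ω volume :=
    (hφc.continuousOn.integrableOn_compact hKcpt).mono_set subset_closure
  -- denominator positivity on closure
  have hden : ∀ x ∈ closure Ω, 0 < (1 - w x) ^ 2 := by
    intro x hx
    have h := hw1 x hx
    have : 0 < 1 - w x := by linarith
    positivity
  have hIq : IntegrableOn (fun x => φ₁ x / (1 - w x) ^ 2) Ω volume := by
    have hc : ContinuousOn (fun x => φ₁ x / (1 - w x) ^ 2) (closure Ω) :=
      hφc.continuousOn.div ((continuous_const.sub hwc).pow 2).continuousOn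
        (fun x hx => ne_of_gt (hden x hx))
    exact (hc.integrableOn_compact hKcpt).mono_set subset_closure
  -- the vector field for Green's identity
  set F : EuclideanSpace ℝ (Fin N) → EuclideanSpace ℝ (Fin N) :=
    fun y => φ₁ y • gradient w y - w y • gradient φ₁ y with hF
  have hFc : ContDiff ℝ 1 F :=
    ((hφsm.of_le (by norm_num)).smul (grad_contDiff w hw)).sub
      ((hw.of_le (by norm_num)).smul (grad_contDiff φ₁ hφsm))
  have hdivF : ∀ x, divg F x = φ₁ x * lap w x - w x * lap φ₁ x := by
    intro x
    have h1 := divg_smul_grad φ₁ w hφsm hw x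
    have h2 := divg_smul_grad w φ₁ hw hφsm x
    have := divg_sub (fun y => φ₁ y • gradient w y) (fun y => w y • gradient φ₁ y) x
      (((hφsm.of_le (by norm_num)).smul (grad_contDiff w hw)).differentiable
        one_ne_zero).differentiableAt
      (((hw.of_le (by norm_num)).smul (grad_contDiff φ₁ hφsm)).differentiable
        one_ne_zero).differentiableAt
    rw [hF, this, h1, h2, real_inner_comm]
    ring
  -- boundary term vanishes
  have hbd : ∀ x ∈ frontier Ω, (inner ℝ (F x) (ν x) : ℝ) = 0 := by
    intro x hx
    have h1 := hwrobin x hx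
    have h2 := hφrobin x hx
    simp only [hF, inner_sub_left, real_inner_smul_left]
    linear_combination φ₁ x * h1 - w x * h2
  have hgreen : (∫ x in Ω, divg F x) = 0 := by
    rw [hdiv F hFc]
    rw [setIntegral_congr_fun isClosed_frontier.measurableSet hbd]
    simp
  -- rewrite the LHS of Green's identity
  have hkey : (∫ x in Ω, divg F x)
      = lam₁ * (∫ x in Ω, w x * φ₁ x) - μ * ∫ x in Ω, φ₁ x / (1 - w x) ^ 2 := by
    have : (∫ x in Ω, divg F x)
        = ∫ x in Ω, (lam₁ * (w x * φ₁ x) - μ * (φ₁ x / (1 - w x) ^ 2)) := by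
      refine setIntegral_congr_fun hΩm fun x hx => ?_
      have hlw : lap w x = -(μ / (1 - w x) ^ 2) := by linarith [hwpde x hx]
      have hlφ : lap φ₁ x = -(lam₁ * φ₁ x) := by linarith [hφeig x hx]
      rw [hdivF x, hlw, hlφ]
      ring
    rw [this, integral_sub (hIwφ.const_mul lam₁) (hIq.const_mul μ),
      integral_const_mul, integral_const_mul]
  have hEq : lam₁ * (∫ x in Ω, w x * φ₁ x) = μ * ∫ x in Ω, φ₁ x / (1 - w x) ^ 2 := by
    have := hkey.symm.trans hgreen
    linarith
  -- J ≥ 1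
  have hJ : (1 : ℝ) ≤ ∫ x in Ω, φ₁ x / (1 - w x) ^ 2 := by
    have hmono : (∫ x in Ω, φ₁ x) ≤ ∫ x in Ω, φ₁ x / (1 - w x) ^ 2 := by
      refine setIntegral_mono_on hIφ hIq hΩm fun x hx => ?_
      have hxcl : x ∈ closure Ω := subset_closure hx
      have h1 : (1 - w x) ^ 2 ≤ 1 := by nlinarith [hw0 x hxcl, hw1 x hxcl]
      rw [le_div_iff₀ (hden x hxcl)]
      nlinarith [(hφpos x hx).le]
    linarith [hφnorm]
  -- I ≤ 1
  have hI1 : (∫ x in Ω, w x * φ₁ x) ≤ 1 := by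
    have hmono : (∫ x in Ω, w x * φ₁ x) ≤ ∫ x in Ω, φ₁ x := by
      refine setIntegral_mono_on hIwφ hIφ hΩm fun x hx => ?_
      nlinarith [(hφpos x hx).le, hw1 x (subset_closure hx), hw0 x (subset_closure hx)]
    linarith [hφnorm]
  have hInn : 0 ≤ ∫ x in Ω, w x * φ₁ x :=
    setIntegral_nonneg hΩm fun x hx =>
      mul_nonneg (hw0 x (subset_closure hx)) (hφpos x hx).le
  have hfirst : μ ≤ lam₁ * ∫ x in Ω, w x * φ₁ x := by
    rw [hEq]
    nlinarith
  refine ⟨hfirst, ?_⟩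
  have hlampos : 0 < lam₁ := by
    by_contra h
    push_neg at h
    nlinarith
  nlinarith
end

section
/- Suppose M : [0, T_q) → ℝ is Lipschitz with M(t) < 1, and for almost every t, M'(t) ≤ λC(1 − M(t))^{-2} with λ, C > 0, and M(t) → 1 as t → T_q. Then for all t ∈ (0, T_q), M(t) ≥ 1 − (3λC)^{1/3}(T_q − t)^{1/3}. -/
open MeasureTheory Set Filter

open Topology

lemma key_ftc (f f' : ℝ → ℝ) (K c a b b' : ℝ) (hab : a ≤ b) (hbb' : b < b') (hK : 0 ≤ K)
    (hLip : ∀ x ∈ Set.Icc a b', ∀ y ∈ Set.Icc a b', |f x - f y| ≤ K * |x - y|)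
    (hd : ∀ᵐ x ∂(volume.restrict (Set.Ioo a b)), HasDerivAt f (f' x) x ∧ c ≤ f' x) :
    c * (b - a) ≤ f b - f a := by
  have hab' : a ≤ b' := hab.trans hbb'.le
  set h : ℕ → ℝ := fun n => (b' - b) / (n + 1) with hh_def
  have hh_pos : ∀ n, 0 < h n := fun n => div_pos (by linarith) (by positivity)
  have hh_le : ∀ n, h n ≤ b' - b := fun n => by
    rw [hh_def]
    apply div_le_self (by linarith)
    push_cast; linarith [Nat.cast_nonneg (α := ℝ) n]
  have hh0 : Tendsto h atTop (𝓝 0) := by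
    have h2 : Tendsto (fun n : ℕ => (b' - b) * (1 / (n + 1))) atTop (𝓝 ((b' - b) * 0)) :=
      tendsto_one_div_add_atTop_nhds_zero_nat.const_mul _
    simpa [hh_def, div_eq_mul_inv] using h2
  -- continuity of f on Icc a b'
  have hLip' : LipschitzOnWith (Real.toNNReal K) f (Icc a b') := by
    apply LipschitzOnWith.of_dist_le_mul
    intro x hx y hy
    rw [Real.dist_eq, Real.dist_eq, Real.coe_toNNReal _ hK]
    exact hLip x hx y hy
  have hcont : ContinuousOn f (Icc a b') := hLip'.continuousOn
  have hfint : IntegrableOn f (Icc a b') := hcont.integrableOn_Icc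
  have hII : ∀ x ∈ Icc a b', ∀ y ∈ Icc a b', IntervalIntegrable f volume x y := by
    intro x hx y hy
    rw [intervalIntegrable_iff]
    exact hfint.mono_set ((Set.uIoc_subset_uIcc).trans (Set.uIcc_subset_Icc hx hy))
  -- difference quotients
  set q : ℕ → ℝ → ℝ := fun n x => (f (x + h n) - f x) / h n with hq_def
  have hmem : ∀ n, ∀ x ∈ Icc a b, x + h n ∈ Icc a b' := by
    intro n x hx
    constructor
    · linarith [hx.1, (hh_pos n).le]
    · linarith [hx.2, hh_le n]
  have hmemIcc : Ioo a b ⊆ Icc a b' := fun x hx => ⟨hx.1.le, hx.2.le.trans hbb'.le⟩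
  -- measurability
  have hmeas : ∀ n, AEStronglyMeasurable (q n) (volume.restrict (Ioo a b)) := by
    intro n
    apply ContinuousOn.aestronglyMeasurable _ measurableSet_Ioo
    apply ContinuousOn.div_const
    apply ContinuousOn.sub
    · exact hcont.comp (continuous_add_right (h n)).continuousOn
        (fun x hx => hmem n x ⟨hx.1.le, hx.2.le⟩)
    · exact hcont.mono hmemIcc
  -- bound
  have hbound : ∀ n, ∀ᵐ x ∂(volume.restrict (Ioo a b)), ‖q n x‖ ≤ K := by
    intro n
    filter_upwards [ae_restrict_mem measurableSet_Ioo] with x hx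
    have h1 : x + h n ∈ Icc a b' := hmem n x ⟨hx.1.le, hx.2.le⟩
    have h2 : x ∈ Icc a b' := hmemIcc hx
    have h3 := hLip _ h1 _ h2
    rw [Real.norm_eq_abs, hq_def]
    rw [abs_div, abs_of_pos (hh_pos n)]
    rw [div_le_iff₀ (hh_pos n)]
    calc |f (x + h n) - f x| ≤ K * |x + h n - x| := h3
      _ = K * h n := by rw [add_sub_cancel_left, abs_of_pos (hh_pos n)]
  -- a.e. convergence to f'
  have hconv : ∀ᵐ x ∂(volume.restrict (Ioo a b)),
      Tendsto (fun n => q n x) atTop (𝓝 (f' x)) := by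
    filter_upwards [hd] with x hx
    have hslope : Tendsto (slope f x) (𝓝[≠] x) (𝓝 (f' x)) :=
      hasDerivAt_iff_tendsto_slope.1 hx.1
    have hseq : Tendsto (fun n => x + h n) atTop (𝓝[≠] x) := by
      apply tendsto_nhdsWithin_of_tendsto_nhds_of_eventually_within
      · have : Tendsto (fun n => x + h n) atTop (𝓝 (x + 0)) :=
          tendsto_const_nhds.add hh0
        simpa using this
      · filter_upwards with n
        simp only [mem_compl_iff, mem_singleton_iff]
        intro hxx
        nlinarith [hh_pos n, hxx]
    have := hslope.comp hseq
    apply this.congr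
    intro n
    simp only [Function.comp_apply, slope_def_field]
    rw [hq_def]
    simp [add_sub_cancel_left]
  -- DCT
  have hbi : Integrable (fun _ : ℝ => K) (volume.restrict (Ioo a b)) := integrable_const _
  have hDCT := tendsto_integral_of_dominated_convergence (μ := volume.restrict (Ioo a b))
    (fun _ => K) hmeas hbi hbound hconv
  have hf'meas : AEStronglyMeasurable f' (volume.restrict (Ioo a b)) :=
    aestronglyMeasurable_of_tendsto_ae atTop hmeas hconv
  have hf'bd : ∀ᵐ x ∂(volume.restrict (Ioo a b)), ‖f' x‖ ≤ K := by
    filter_upwards [hconv, ae_all_iff.2 hbound] with x hx hbx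
    exact le_of_tendsto hx.norm (Eventually.of_forall hbx)
  have hf'int : Integrable f' (volume.restrict (Ioo a b)) :=
    Integrable.mono' (integrable_const K) hf'meas hf'bd
  -- second computation of the limit
  have hInt_eq : ∀ n, ∫ x in Ioo a b, q n x =
      ((∫ x in b..(b + h n), f x) - ∫ x in a..(a + h n), f x) / h n := by
    intro n
    rw [← integral_Ioc_eq_integral_Ioo, ← intervalIntegral.integral_of_le hab]
    have cc : ContinuousOn (fun x => f (x + h n)) (Icc a b) :=
      hcont.comp (continuous_add_right (h n)).continuousOn (fun x hx => hmem n x hx)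
    have i1 : IntervalIntegrable (fun x => f (x + h n)) volume a b :=
      cc.intervalIntegrable_of_Icc hab
    have i2 : IntervalIntegrable f volume a b :=
      hII a ⟨le_refl a, hab'⟩ b ⟨hab, hbb'.le⟩
    have key : ∫ x in a..b, q n x =
        ((∫ x in a..b, f (x + h n)) - ∫ x in a..b, f x) / h n := by
      rw [hq_def]
      simp only
      rw [intervalIntegral.integral_div, intervalIntegral.integral_sub i1 i2]
    rw [key]
    congr 1
    rw [intervalIntegral.integral_comp_add_right f (h n)]
    have e1 : (∫ x in a..(b + h n), f x) =
        (∫ x in a..(a + h n), f x) + ∫ x in (a + h n)..(b + h n), f x := by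
      rw [intervalIntegral.integral_add_adjacent_intervals
        (hII a ⟨le_refl a, hab'⟩ _ (hmem n a ⟨le_refl a, hab⟩))
        (hII _ (hmem n a ⟨le_refl a, hab⟩) _ (hmem n b ⟨hab, le_refl b⟩))]
    have e2 : (∫ x in a..(b + h n), f x) =
        (∫ x in a..b, f x) + ∫ x in b..(b + h n), f x := by
      rw [intervalIntegral.integral_add_adjacent_intervals
        (hII a ⟨le_refl a, hab'⟩ b ⟨hab, hbb'.le⟩)
        (hII b ⟨hab, hbb'.le⟩ _ (hmem n b ⟨hab, le_refl b⟩))]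
    linarith [e1, e2]
  have hclose : ∀ n, |(∫ x in Ioo a b, q n x) - (f b - f a)| ≤ 2 * K * h n := by
    intro n
    have est : ∀ z ∈ Icc a b, |(∫ x in z..(z + h n), f x) - h n * f z| ≤ K * h n * h n := by
      intro z hz
      have hz' : z ∈ Icc a b' := ⟨hz.1, hz.2.trans hbb'.le⟩
      have hzh : z + h n ∈ Icc a b' := hmem n z hz
      have : (∫ x in z..(z + h n), f x) - h n * f z = ∫ x in z..(z + h n), (f x - f z) := by
        rw [intervalIntegral.integral_sub (hII z hz' _ hzh) intervalIntegrable_const,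
          intervalIntegral.integral_const, smul_eq_mul, add_sub_cancel_left]
      rw [this]
      have := intervalIntegral.norm_integral_le_of_norm_le_const
        (C := K * h n) (f := fun x => f x - f z) (a := z) (b := z + h n) ?_
      · rw [Real.norm_eq_abs] at this
        calc |∫ x in z..(z + h n), (f x - f z)| ≤ K * h n * |z + h n - z| := this
          _ = K * h n * h n := by rw [add_sub_cancel_left, abs_of_pos (hh_pos n)]
      · intro x hx
        rw [Set.uIoc_of_le (by linarith [hh_pos n])] at hx
        have hx1 : x ∈ Icc a b' := ⟨hz.1.trans hx.1.le, hx.2.trans hzh.2⟩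
        rw [Real.norm_eq_abs]
        calc |f x - f z| ≤ K * |x - z| := hLip x hx1 z hz'
          _ ≤ K * h n := by
            apply mul_le_mul_of_nonneg_left _ hK
            rw [abs_of_nonneg (by linarith [hx.1])]
            linarith [hx.2]
    rw [hInt_eq n]
    have eb := est b ⟨hab, le_refl b⟩
    have ea := est a ⟨le_refl a, hab⟩
    have hne := (hh_pos n).ne'
    have : ((∫ x in b..(b + h n), f x) - ∫ x in a..(a + h n), f x) / h n - (f b - f a) =
        (((∫ x in b..(b + h n), f x) - h n * f b) - ((∫ x in a..(a + h n), f x) - h n * f a)) / h n := by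
      field_simp
      ring
    rw [this, abs_div, abs_of_pos (hh_pos n), div_le_iff₀ (hh_pos n)]
    calc |((∫ x in b..(b + h n), f x) - h n * f b) - ((∫ x in a..(a + h n), f x) - h n * f a)|
        ≤ |(∫ x in b..(b + h n), f x) - h n * f b| + |(∫ x in a..(a + h n), f x) - h n * f a| :=
          abs_sub _ _
      _ ≤ K * h n * h n + K * h n * h n := add_le_add eb ea
      _ = 2 * K * h n * h n := by ring
  have hlim2 : Tendsto (fun n => ∫ x in Ioo a b, q n x) atTop (𝓝 (f b - f a)) := by
    rw [← tendsto_sub_nhds_zero_iff]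
    apply squeeze_zero_norm (fun n => by simpa [Real.norm_eq_abs] using hclose n)
    have : Tendsto (fun n => 2 * K * h n) atTop (𝓝 (2 * K * 0)) := hh0.const_mul _
    simpa using this
  have heq : ∫ x in Ioo a b, f' x = f b - f a := tendsto_nhds_unique hDCT hlim2
  -- conclude
  have hle : ∫ x in Ioo a b, (c : ℝ) ≤ ∫ x in Ioo a b, f' x := by
    apply integral_mono_ae (integrable_const _) hf'int
    filter_upwards [hd] with x hx using hx.2
  have hconst : ∫ x in Ioo a b, (c : ℝ) = c * (b - a) := by
    rw [setIntegral_const, smul_eq_mul, Real.volume_real_Ioo_of_le hab]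
    ring
  rw [hconst, heq] at hle
  exact hle


theorem stmt_15 (Tq lam C K : ℝ) (hTq : 0 < Tq) (hlam : 0 < lam) (hC : 0 < C)
    (M M' : ℝ → ℝ) (hLip : LipschitzOnWith (Real.toNNReal K) M (Ico 0 Tq))
    (hM1 : ∀ t ∈ Ico (0:ℝ) Tq, M t < 1)
    (hM' : ∀ᵐ t ∂(volume.restrict (Ioo 0 Tq)),
      HasDerivAt M (M' t) t ∧ M' t ≤ lam * C / (1 - M t) ^ 2)
    (hlim : Tendsto M (nhdsWithin Tq (Iio Tq)) (nhds 1)) :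
    ∀ t ∈ Ioo (0:ℝ) Tq,
      1 - (3 * lam * C) ^ ((1:ℝ)/3) * (Tq - t) ^ ((1:ℝ)/3) ≤ M t := by
  intro t ht
  set K₀ : ℝ := max K 0 with hK₀_def
  have hK₀ : 0 ≤ K₀ := le_max_right _ _
  have hMK : ∀ x ∈ Ico (0:ℝ) Tq, ∀ y ∈ Ico (0:ℝ) Tq, |M x - M y| ≤ K₀ * |x - y| := by
    intro x hx y hy
    have := hLip.dist_le_mul x hx y hy
    rwa [Real.dist_eq, Real.dist_eq, Real.coe_toNNReal'] at this
  set B : ℝ := |1 - M 0| + K₀ * Tq with hB_def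
  have hB : ∀ x ∈ Ico (0:ℝ) Tq, |1 - M x| ≤ B := by
    intro x hx
    have h1 := hMK 0 ⟨le_refl 0, hTq⟩ x hx
    have h2 : |1 - M x| ≤ |1 - M 0| + |M 0 - M x| := by
      have : (1 : ℝ) - M x = (1 - M 0) + (M 0 - M x) := by ring
      rw [this]; exact abs_add_le _ _
    have h3 : |(0:ℝ) - x| = x := by rw [zero_sub, abs_neg, abs_of_nonneg hx.1]
    rw [h3] at h1
    have : K₀ * x ≤ K₀ * Tq := mul_le_mul_of_nonneg_left hx.2.le hK₀
    calc |1 - M x| ≤ |1 - M 0| + |M 0 - M x| := h2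
      _ ≤ |1 - M 0| + K₀ * x := by linarith
      _ ≤ B := by rw [hB_def]; linarith
  set g : ℝ → ℝ := fun x => (1 - M x) ^ 3 with hg_def
  set g' : ℝ → ℝ := fun x => -(3 * (1 - M x) ^ 2 * M' x) with hg'_def
  -- Lipschitz bound for g on Ico 0 Tq
  have hgLip : ∀ x ∈ Ico (0:ℝ) Tq, ∀ y ∈ Ico (0:ℝ) Tq, |g x - g y| ≤ (3 * K₀ * B ^ 2) * |x - y| := by
    intro x hx y hy
    have hpx := hB x hx
    have hpy := hB y hy
    set p : ℝ := 1 - M x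
    set q : ℝ := 1 - M y
    have hfac : g x - g y = (p - q) * (p ^ 2 + p * q + q ^ 2) := by
      rw [hg_def]; ring
    rw [hfac, abs_mul]
    have hpq : |p - q| = |M x - M y| := by
      have : p - q = -(M x - M y) := by ring
      rw [this, abs_neg]
    have hquad : |p ^ 2 + p * q + q ^ 2| ≤ 3 * B ^ 2 := by
      have hp := abs_le.mp hpx
      have hq := abs_le.mp hpy
      rw [abs_le]
      constructor <;> nlinarith [sq_nonneg (p + q), sq_nonneg (p - q), sq_nonneg p, sq_nonneg q]
    calc |p - q| * |p ^ 2 + p * q + q ^ 2| ≤ (K₀ * |x - y|) * (3 * B ^ 2) := by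
          apply mul_le_mul (hpq ▸ hMK x hx y hy) hquad (abs_nonneg _)
          positivity
      _ = (3 * K₀ * B ^ 2) * |x - y| := by ring
  -- for every s in (t, Tq), apply the key lemma on [t, s]
  have hmain : ∀ s ∈ Ioo t Tq, g t ≤ g s + 3 * lam * C * (s - t) := by
    intro s hs
    set b' : ℝ := (s + Tq) / 2 with hb'_def
    have hsb' : s < b' := by rw [hb'_def]; linarith [hs.2]
    have hb'Tq : b' < Tq := by rw [hb'_def]; linarith [hs.2]
    have hsub : Icc t b' ⊆ Ico 0 Tq := fun x hx => ⟨le_trans ht.1.le hx.1, lt_of_le_of_lt hx.2 hb'Tq⟩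
    have hd : ∀ᵐ x ∂(volume.restrict (Ioo t s)),
        HasDerivAt g (g' x) x ∧ -(3 * lam * C) ≤ g' x := by
      have hss : Ioo t s ⊆ Ioo 0 Tq := fun x hx => ⟨lt_trans ht.1 hx.1, lt_trans hx.2 hs.2⟩
      have h1 : ∀ᵐ x ∂(volume.restrict (Ioo t s)),
          HasDerivAt M (M' x) x ∧ M' x ≤ lam * C / (1 - M x) ^ 2 :=
        ae_restrict_of_ae_restrict_of_subset hss hM'
      filter_upwards [h1, ae_restrict_mem measurableSet_Ioo] with x hx hxm
      have hxIco : x ∈ Ico (0:ℝ) Tq := ⟨(lt_trans ht.1 hxm.1).le, lt_trans hxm.2 hs.2⟩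
      have hMx : M x < 1 := hM1 x hxIco
      have hpos : (0:ℝ) < (1 - M x) ^ 2 := pow_pos (by linarith) 2
      constructor
      · have hder : HasDerivAt (fun y => (1 - M y) ^ 3)
            ((3 : ℕ) * (1 - M x) ^ (3 - 1) * (-(M' x))) x := by
          exact (((hasDerivAt_const x (1:ℝ)).sub hx.1).pow 3).congr_deriv (by simp only [Pi.sub_apply]; push_cast; ring)
        have : g' x = (3 : ℕ) * (1 - M x) ^ (3 - 1) * (-(M' x)) := by
          rw [hg'_def]; push_cast; ring
        rw [hg_def, this]
        exact hder
      · have h2 : M' x * (1 - M x) ^ 2 ≤ lam * C := by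
          rw [← le_div_iff₀ hpos]
          exact hx.2
        show -(3 * lam * C) ≤ -(3 * (1 - M x) ^ 2 * M' x)
        nlinarith [h2]
    have := key_ftc g g' (3 * K₀ * B ^ 2) (-(3 * lam * C)) t s b' hs.1.le hsb'
      (by positivity)
      (fun x hx y hy => hgLip x (hsub hx) y (hsub hy)) hd
    linarith
  -- limit s → Tq
  have hglim : Tendsto (fun s => g s + 3 * lam * C * (s - t)) (𝓝[<] Tq)
      (𝓝 (0 + 3 * lam * C * (Tq - t))) := by
    apply Tendsto.add
    · have hc : Continuous (fun y : ℝ => (1 - y) ^ 3) := (continuous_const.sub continuous_id).pow 3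
      have := (hc.tendsto 1).comp hlim
      simpa [hg_def, Function.comp_def] using this
    · have hc : Continuous (fun s : ℝ => 3 * lam * C * (s - t)) := continuous_const.mul (continuous_id.sub continuous_const)
      exact (hc.tendsto Tq).mono_left nhdsWithin_le_nhds
  have hNeBot : (𝓝[<] Tq).NeBot := nhdsLT_neBot Tq
  have hgt : g t ≤ 0 + 3 * lam * C * (Tq - t) := by
    apply ge_of_tendsto hglim
    filter_upwards [Ioo_mem_nhdsLT ht.2] with s hs using hmain s hs
  have hcube : (1 - M t) ^ 3 ≤ 3 * lam * C * (Tq - t) := by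
    simp only [hg_def] at hgt; linarith
  -- conclude via rpow
  have h1Mt : 0 < 1 - M t := by
    have := hM1 t ⟨ht.1.le, ht.2⟩; linarith
  have hTqt : (0:ℝ) ≤ Tq - t := by linarith [ht.2]
  suffices h : 1 - M t ≤ (3 * lam * C) ^ ((1:ℝ)/3) * (Tq - t) ^ ((1:ℝ)/3) by linarith
  have hrw : ((1 - M t) ^ (3:ℕ) : ℝ) ^ ((1:ℝ)/3) = 1 - M t := by
    rw [← Real.rpow_natCast (1 - M t) 3, ← Real.rpow_mul h1Mt.le]
    norm_num
  calc 1 - M t = ((1 - M t) ^ (3:ℕ) : ℝ) ^ ((1:ℝ)/3) := hrw.symm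
    _ ≤ (3 * lam * C * (Tq - t)) ^ ((1:ℝ)/3) :=
        Real.rpow_le_rpow (by positivity) hcube (by norm_num)
    _ = (3 * lam * C) ^ ((1:ℝ)/3) * (Tq - t) ^ ((1:ℝ)/3) :=
        Real.mul_rpow (by positivity) hTqt
end
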